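/- arXiv:2306.13194 — 3 statements merged into one kernel-verified Lean document; each statement's English description precedes it below -/
import Mathlib

section
/- Under the stated IPG setting, a single preconditioner update contracts the preconditioner error up to a term proportional to the estimation error: for every k ≥ 0, ‖K̃_{k+1}‖ ≤ ρ_k ‖K̃_k‖ + γ η α_k ‖z_k‖. -/
open scoped Matrix.Norms.L2Operator RealInnerProductSpace

section Aux

variable {d : ℕ}

local notation "E" => EuclideanSpace ℝ (Fin d)

/-- Derivative of a line. -/
lemma line_hasDerivAt (x v : E) (t : ℝ) :
    HasDerivAt (fun s : ℝ => x + s • v) v t := by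
  simpa using ((hasDerivAt_id t).smul_const v).const_add x

/-- First-order convexity inequality. -/
lemma conv_first_order {F : E → ℝ} {g : E → E}
    (hFconv : ConvexOn ℝ Set.univ F) (hgrad : ∀ ξ, HasGradientAt F (g ξ) ξ)
    (x y : E) : ⟪g x, y - x⟫ ≤ F y - F x := by
  set φ : ℝ → ℝ := fun t => F (x + t • (y - x)) with hφ
  have hconv : ConvexOn ℝ Set.univ φ := by
    have := hFconv.comp_affineMap (AffineMap.lineMap x y : ℝ →ᵃ[ℝ] E)
    have heq : (F ∘ (AffineMap.lineMap x y : ℝ →ᵃ[ℝ] E)) = φ := by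
      funext t
      simp [hφ, AffineMap.lineMap_apply, add_comm, Function.comp]
    rw [heq] at this
    simpa using this
  have hline := line_hasDerivAt x (y - x) 0
  have hder : HasDerivAt φ ⟪g x, y - x⟫ 0 := by
    have h := (hgrad (x + (0:ℝ) • (y - x))).hasFDerivAt.comp_hasDerivAt 0 hline
    simp only [zero_smul, add_zero] at h
    simpa [InnerProductSpace.toDual_apply_apply, Function.comp_def] using h
  have := ConvexOn.le_slope_of_hasDerivAt (S := Set.univ) hconv (Set.mem_univ 0) (Set.mem_univ 1)
    one_pos hder
  simpa [slope_def_field, hφ] using this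

/-- Monotonicity of the gradient. -/
lemma grad_mono {F : E → ℝ} {g : E → E}
    (hFconv : ConvexOn ℝ Set.univ F) (hgrad : ∀ ξ, HasGradientAt F (g ξ) ξ)
    (x y : E) : 0 ≤ ⟪g y - g x, y - x⟫ := by
  have h1 := conv_first_order hFconv hgrad x y
  have h2 := conv_first_order hFconv hgrad y x
  have h2' : -⟪g y, y - x⟫ ≤ F x - F y := by
    rw [show x - y = -(y - x) from (neg_sub y x).symm, inner_neg_right] at h2
    simpa using h2
  rw [inner_sub_left]
  linarith

/-- The Hessian is positive semidefinite at every point, given convexity. -/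
lemma hess_psd {F : E → ℝ} {g : E → E} {H : E → Matrix (Fin d) (Fin d) ℝ}
    (hFconv : ConvexOn ℝ Set.univ F) (hgrad : ∀ ξ, HasGradientAt F (g ξ) ξ)
    (hHess : ∀ ξ, HasFDerivAt g (Matrix.toEuclideanCLM (𝕜 := ℝ) (H ξ)) ξ)
    (x : E) (v : E) : 0 ≤ ⟪(Matrix.toEuclideanCLM (𝕜 := ℝ) (H x)) v, v⟫ := by
  set ψ : ℝ → ℝ := fun t => ⟪g (x + t • v) - g x, v⟫ with hψ
  have hslope : ∀ t : ℝ, t ≠ 0 → 0 ≤ ψ t / t := by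
    intro t ht
    have hm := grad_mono hFconv hgrad x (x + t • v)
    have h0 : (x + t • v) - x = t • v := by abel
    rw [h0, real_inner_smul_right] at hm
    have : ψ t / t = (t * ψ t) / t ^ 2 := by
      field_simp
    rw [this]
    exact div_nonneg hm (sq_nonneg t)
  have hline := line_hasDerivAt x v 0
  have hgd : HasDerivAt (fun t : ℝ => g (x + t • v))
      ((Matrix.toEuclideanCLM (𝕜 := ℝ) (H x)) v) 0 := by
    have h := (hHess (x + (0:ℝ) • v)).comp_hasDerivAt 0 hline
    simpa [Function.comp_def] using h
  have hder : HasDerivAt ψ ⟪(Matrix.toEuclideanCLM (𝕜 := ℝ) (H x)) v, v⟫ 0 := by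
    have h := HasDerivAt.inner ℝ (hgd.sub_const (g x)) (hasDerivAt_const 0 v)
    simpa [hψ] using h
  have htend := hasDerivAt_iff_tendsto_slope.mp hder
  refine ge_of_tendsto htend ?_
  filter_upwards [self_mem_nhdsWithin] with t ht
  have ht0 : t ≠ 0 := ht
  have : slope ψ 0 t = ψ t / t := by
    simp [slope_def_field, hψ]
  rw [this]
  exact hslope t ht0

end Aux

theorem ipg_preconditioner_single_step_bound
    {d : ℕ}
    (F : EuclideanSpace ℝ (Fin d) → ℝ)
    (g : EuclideanSpace ℝ (Fin d) → EuclideanSpace ℝ (Fin d))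
    (H : EuclideanSpace ℝ (Fin d) → Matrix (Fin d) (Fin d) ℝ)
    (hFconv : ConvexOn ℝ Set.univ F)
    (hgrad : ∀ ξ, HasGradientAt F (g ξ) ξ)
    (hHess : ∀ ξ, HasFDerivAt g (Matrix.toEuclideanCLM (𝕜 := ℝ) (H ξ)) ξ)
    (hHcont : Continuous H)
    (ξstar : EuclideanSpace ℝ (Fin d))
    (hmin : ∀ ξ, F ξstar ≤ F ξ)
    (γ : ℝ) (hγ : 0 < γ)
    (hHlip : ∀ ξ₁ ξ₂, ‖H ξ₁ - H ξ₂‖ ≤ γ * ‖ξ₁ - ξ₂‖)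
    (β : ℝ) (hβ : 0 < β)
    (Kstar : Matrix (Fin d) (Fin d) ℝ)
    (hKstar : Kstar = (H ξstar + β • (1 : Matrix (Fin d) (Fin d) ℝ))⁻¹)
    (η : ℝ) (hη : η = ‖Kstar‖)
    (δ : ℝ) (hδ : 0 < δ)
    (α : ℕ → ℝ) (hα : ∀ k, 0 < α k)
    (ξ : ℕ → EuclideanSpace ℝ (Fin d))
    (K : ℕ → Matrix (Fin d) (Fin d) ℝ)
    (hξ : ∀ k, ξ (k + 1) = ξ k - δ • (Matrix.toEuclideanCLM (𝕜 := ℝ) (K k)) (g (ξ k)))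
    (hK : ∀ k, K (k + 1) =
      K k - α k • ((H (ξ k) + β • (1 : Matrix (Fin d) (Fin d) ℝ)) * K k - 1)) :
    ∀ k, ‖K (k + 1) - Kstar‖ ≤
      ‖(1 : Matrix (Fin d) (Fin d) ℝ)
        - α k • (H (ξ k) + β • (1 : Matrix (Fin d) (Fin d) ℝ))‖ * ‖K k - Kstar‖
      + γ * η * α k * ‖ξ k - ξstar‖ := by
  intro k
  set Astar : Matrix (Fin d) (Fin d) ℝ := H ξstar + β • (1 : Matrix (Fin d) (Fin d) ℝ)
    with hAstar
  set Ak : Matrix (Fin d) (Fin d) ℝ := H (ξ k) + β • (1 : Matrix (Fin d) (Fin d) ℝ) with hAk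
  -- Astar is invertible
  have hinj : Function.Injective Astar.mulVec := by
    have hzero : ∀ w : Fin d → ℝ, Astar.mulVec w = 0 → w = 0 := by
      intro w hw
      set x : EuclideanSpace ℝ (Fin d) := (WithLp.equiv 2 (Fin d → ℝ)).symm w with hx
      have hx0 : (Matrix.toEuclideanCLM (𝕜 := ℝ) Astar) x = 0 := by
        rw [hx, WithLp.equiv_symm_apply, Matrix.toEuclideanCLM_toLp]
        simp [Matrix.toLin'_apply, hw]
      have hsum : (0:ℝ) = ⟪(Matrix.toEuclideanCLM (𝕜 := ℝ) Astar) x, x⟫ := by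
        rw [hx0]; simp
      have hexp : ⟪(Matrix.toEuclideanCLM (𝕜 := ℝ) Astar) x, x⟫
          = ⟪(Matrix.toEuclideanCLM (𝕜 := ℝ) (H ξstar)) x, x⟫ + β * ‖x‖ ^ 2 := by
        rw [hAstar, map_add, map_smul, map_one, ContinuousLinearMap.add_apply,
          ContinuousLinearMap.smul_apply, ContinuousLinearMap.one_apply, inner_add_left,
          real_inner_smul_left, real_inner_self_eq_norm_sq]
      have hpsd := hess_psd hFconv hgrad hHess ξstar x
      have hxnorm : β * ‖x‖ ^ 2 ≤ 0 := by
        rw [hexp] at hsum; linarith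
      have : ‖x‖ ^ 2 ≤ 0 := by
        by_contra h
        push_neg at h
        nlinarith
      have hx0' : x = 0 := by
        have := sq_nonneg ‖x‖
        have hn : ‖x‖ ^ 2 = 0 := le_antisymm ‹‖x‖ ^ 2 ≤ 0› (sq_nonneg _)
        have : ‖x‖ = 0 := by nlinarith [norm_nonneg x]
        exact norm_eq_zero.mp this
      have := congrArg (WithLp.equiv 2 (Fin d → ℝ)) (hx0' : x = 0)
      simpa [hx] using this
    intro a b hab
    have : Astar.mulVec (a - b) = 0 := by
      rw [Matrix.mulVec_sub, hab, sub_self]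
    have := hzero _ this
    exact sub_eq_zero.mp this
  have hunit : IsUnit Astar := Matrix.mulVec_injective_iff_isUnit.mp hinj
  have hAK : Astar * Kstar = 1 := by
    rw [hKstar]
    exact Matrix.mul_nonsing_inv _ ((Matrix.isUnit_iff_isUnit_det _).mp hunit)
  -- key algebraic identity
  have key : K (k + 1) - Kstar
      = (1 - α k • Ak) * (K k - Kstar) + α k • ((Astar - Ak) * Kstar) := by
    rw [hK k]
    rw [sub_mul, one_mul, sub_mul, smul_mul_assoc, mul_sub, hAK]
    rw [smul_sub, smul_sub, smul_sub]
    abel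
  have hnorm1 : ‖(Astar - Ak) * Kstar‖ ≤ γ * ‖ξ k - ξstar‖ * η := by
    have h1 : Astar - Ak = H ξstar - H (ξ k) := by
      rw [hAstar, hAk]; abel
    calc ‖(Astar - Ak) * Kstar‖ ≤ ‖Astar - Ak‖ * ‖Kstar‖ := norm_mul_le _ _
      _ ≤ (γ * ‖ξstar - ξ k‖) * ‖Kstar‖ := by
          apply mul_le_mul_of_nonneg_right _ (norm_nonneg _)
          rw [h1]; exact hHlip ξstar (ξ k)
      _ = γ * ‖ξ k - ξstar‖ * η := by rw [hη, norm_sub_rev]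
  calc ‖K (k + 1) - Kstar‖
      = ‖(1 - α k • Ak) * (K k - Kstar) + α k • ((Astar - Ak) * Kstar)‖ := by rw [key]
    _ ≤ ‖(1 - α k • Ak) * (K k - Kstar)‖ + ‖α k • ((Astar - Ak) * Kstar)‖ := norm_add_le _ _
    _ ≤ ‖1 - α k • Ak‖ * ‖K k - Kstar‖ + α k * ‖(Astar - Ak) * Kstar‖ := by
        gcongr
        · exact norm_mul_le _ _
        · rw [norm_smul, Real.norm_eq_abs, abs_of_pos (hα k)]
    _ ≤ ‖1 - α k • Ak‖ * ‖K k - Kstar‖ + α k * (γ * ‖ξ k - ξstar‖ * η) := by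
        gcongr
        exact (hα k).le
    _ = ‖1 - α k • Ak‖ * ‖K k - Kstar‖ + γ * η * α k * ‖ξ k - ξstar‖ := by ring
end

section
/- Under the stated setting, for any ξ ∈ ℝ^d and K ∈ ℝ^{d×d}, the point ξ′ = ξ − δ K g(ξ) satisfies ‖ξ′ − ξ*‖ ≤ (δηγ/2)‖ξ − ξ*‖² + ηq|1 − δ|·‖ξ − ξ*‖ + ηβ‖ξ − ξ*‖ + δl‖K − K*‖·‖ξ − ξ*‖. -/
open scoped Matrix.Norms.L2Operator


section aux
variable {d : ℕ}

lemma aux_opbound (A : Matrix (Fin d) (Fin d) ℝ) (x : EuclideanSpace ℝ (Fin d)) :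
    ‖(Matrix.toEuclideanCLM (𝕜 := ℝ) A) x‖ ≤ ‖A‖ * ‖x‖ := by
  rw [Matrix.cstar_norm_def]
  exact (Matrix.toEuclideanCLM (𝕜 := ℝ) A).le_opNorm x

lemma aux_line_deriv (a w : EuclideanSpace ℝ (Fin d)) (t : ℝ) :
    HasDerivAt (fun s : ℝ => a + s • w) w t :=
  by simpa using ((hasDerivAt_id t).smul_const w).const_add a

end aux

section aux2
variable {d : ℕ}

lemma aux_taylor
    (g : EuclideanSpace ℝ (Fin d) → EuclideanSpace ℝ (Fin d))
    (H : EuclideanSpace ℝ (Fin d) → Matrix (Fin d) (Fin d) ℝ)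
    (hHess : ∀ ξ, HasFDerivAt g (Matrix.toEuclideanCLM (𝕜 := ℝ) (H ξ)) ξ)
    (hHcont : Continuous H)
    (γ : ℝ) (hγ : 0 ≤ γ)
    (hHlip : ∀ ξ₁ ξ₂, ‖H ξ₁ - H ξ₂‖ ≤ γ * ‖ξ₁ - ξ₂‖)
    (a x : EuclideanSpace ℝ (Fin d)) :
    ‖g x - g a - (Matrix.toEuclideanCLM (𝕜 := ℝ) (H a)) (x - a)‖ ≤ γ / 2 * ‖x - a‖ ^ 2 := by
  set u := x - a with hu
  set T := fun A : Matrix (Fin d) (Fin d) ℝ => Matrix.toEuclideanCLM (𝕜 := ℝ) A with hT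
  set f : ℝ → EuclideanSpace ℝ (Fin d) := fun t => g (a + t • u) - t • (T (H a) u) with hf
  set f' : ℝ → EuclideanSpace ℝ (Fin d) := fun t => T (H (a + t • u)) u - T (H a) u with hf'
  have hfd : ∀ t : ℝ, HasDerivAt f (f' t) t := by
    intro t
    have h1 : HasDerivAt (fun s : ℝ => g (a + s • u)) (T (H (a + t • u)) u) t :=
      (hHess (a + t • u)).comp_hasDerivAt t (aux_line_deriv a u t)
    have h2 : HasDerivAt (fun s : ℝ => s • (T (H a) u)) (T (H a) u) t := by
      simpa using (hasDerivAt_id t).smul_const (T (H a) u)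
    exact h1.sub h2
  have hTiso : Isometry (fun A : Matrix (Fin d) (Fin d) ℝ => T A) :=
    AddMonoidHomClass.isometry_of_norm (Matrix.toEuclideanCLM (𝕜 := ℝ)) (fun A => rfl)
  have hcont : Continuous f' := by
    apply Continuous.sub _ continuous_const
    have hc1 : Continuous fun t : ℝ => T (H (a + t • u)) :=
      hTiso.continuous.comp (hHcont.comp (continuous_const.add (continuous_id.smul continuous_const)))
    exact (ContinuousLinearMap.apply ℝ (EuclideanSpace ℝ (Fin d)) u).continuous.comp hc1
  have key : f 1 - f 0 = ∫ t in (0:ℝ)..1, f' t :=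
    (intervalIntegral.integral_eq_sub_of_hasDerivAt (fun t _ => hfd t)
      (hcont.intervalIntegrable 0 1)).symm
  have hval : f 1 - f 0 = g x - g a - T (H a) u := by
    simp only [hf, one_smul, zero_smul, add_zero, smul_zero, sub_zero]
    rw [hu]
    simp [add_sub_cancel]
    abel
  have hbound : ‖∫ t in (0:ℝ)..1, f' t‖ ≤ γ / 2 * ‖u‖ ^ 2 := by
    have hb : ∀ᵐ t ∂MeasureTheory.volume.restrict (Set.uIoc (0:ℝ) 1),
        ‖f' t‖ ≤ γ * ‖u‖ ^ 2 * t := by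
      refine (MeasureTheory.ae_restrict_iff' measurableSet_uIoc).mpr ?_
      refine MeasureTheory.ae_of_all _ (fun t ht => ?_)
      rw [Set.uIoc_of_le (by norm_num : (0:ℝ) ≤ 1)] at ht
      have : f' t = T (H (a + t • u) - H a) u := by
        simp only [hf', hT, map_sub, ContinuousLinearMap.sub_apply]
      rw [this]
      calc ‖T (H (a + t • u) - H a) u‖ ≤ ‖H (a + t • u) - H a‖ * ‖u‖ := aux_opbound _ _
        _ ≤ (γ * ‖(a + t • u) - a‖) * ‖u‖ :=
            mul_le_mul_of_nonneg_right (hHlip _ _) (norm_nonneg u)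
        _ = γ * ‖u‖ ^ 2 * t := by
            rw [add_sub_cancel_left, norm_smul, Real.norm_eq_abs, abs_of_pos ht.1]
            ring
    have hgint : IntervalIntegrable (fun t => γ * ‖u‖ ^ 2 * t) MeasureTheory.volume 0 1 :=
      ((continuous_const.mul continuous_id) : Continuous fun t : ℝ => γ * ‖u‖ ^ 2 * t).intervalIntegrable 0 1
    have hI : (∫ t in (0:ℝ)..1, γ * ‖u‖ ^ 2 * t) = γ / 2 * ‖u‖ ^ 2 := by
      rw [intervalIntegral.integral_const_mul, integral_id]
      ring
    calc ‖∫ t in (0:ℝ)..1, f' t‖ ≤ |∫ t in (0:ℝ)..1, γ * ‖u‖ ^ 2 * t| :=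
          intervalIntegral.norm_integral_le_abs_of_norm_le hb hgint
      _ = γ / 2 * ‖u‖ ^ 2 := by
          rw [hI, abs_of_nonneg (by positivity)]
  rw [← hval, key] at *
  exact hbound

end aux2

section aux3
variable {d : ℕ}

lemma aux_g0
    (F : EuclideanSpace ℝ (Fin d) → ℝ)
    (g : EuclideanSpace ℝ (Fin d) → EuclideanSpace ℝ (Fin d))
    (hgrad : ∀ ξ, HasGradientAt F (g ξ) ξ)
    (ξstar : EuclideanSpace ℝ (Fin d))
    (hmin : ∀ ξ, F ξstar ≤ F ξ) : g ξstar = 0 := by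
  have h2 : IsLocalMin F ξstar := Filter.Eventually.of_forall hmin
  have h3 := h2.hasFDerivAt_eq_zero (hgrad ξstar)
  have h4 := congrArg (InnerProductSpace.toDual ℝ (EuclideanSpace ℝ (Fin d))).symm h3
  simpa using h4

lemma aux_psd
    (F : EuclideanSpace ℝ (Fin d) → ℝ)
    (g : EuclideanSpace ℝ (Fin d) → EuclideanSpace ℝ (Fin d))
    (H : EuclideanSpace ℝ (Fin d) → Matrix (Fin d) (Fin d) ℝ)
    (hFconv : ConvexOn ℝ Set.univ F)
    (hgrad : ∀ ξ, HasGradientAt F (g ξ) ξ)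
    (hHess : ∀ ξ, HasFDerivAt g (Matrix.toEuclideanCLM (𝕜 := ℝ) (H ξ)) ξ)
    (ξstar : EuclideanSpace ℝ (Fin d))
    (hmin : ∀ ξ, F ξstar ≤ F ξ)
    (w : EuclideanSpace ℝ (Fin d)) :
    0 ≤ (inner ℝ ((Matrix.toEuclideanCLM (𝕜 := ℝ) (H ξstar)) w) w : ℝ) := by
  have hg0 : g ξstar = 0 := aux_g0 F g hgrad ξstar hmin
  set φ : ℝ → ℝ := fun t => F (ξstar + t • w) with hφ
  set ψ : ℝ → ℝ := fun t => (inner ℝ (g (ξstar + t • w)) w : ℝ) with hψ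
  have hφd : ∀ t, HasDerivAt φ (ψ t) t := by
    intro t
    have h1 := (hgrad (ξstar + t • w)).hasFDerivAt.comp_hasDerivAt t (aux_line_deriv ξstar w t)
    simpa [hψ, InnerProductSpace.toDual_apply_apply, real_inner_comm, Function.comp_def] using h1
  have hψd : HasDerivAt ψ (inner ℝ ((Matrix.toEuclideanCLM (𝕜 := ℝ) (H ξstar)) w) w : ℝ) 0 := by
    have hgd : HasDerivAt (fun t : ℝ => g (ξstar + t • w))
        ((Matrix.toEuclideanCLM (𝕜 := ℝ) (H ξstar)) w) 0 := by
      have := (hHess (ξstar + (0:ℝ) • w)).comp_hasDerivAt 0 (aux_line_deriv ξstar w 0)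
      simpa [Function.comp_def] using this
    have := hgd.inner ℝ (hasDerivAt_const (0:ℝ) w)
    simpa [hψ] using this
  have hφconv : ConvexOn ℝ Set.univ φ := by
    have h := hFconv.comp_affineMap (AffineMap.lineMap ξstar (ξstar + w) : ℝ →ᵃ[ℝ] _)
    have he : φ = F ∘ (AffineMap.lineMap ξstar (ξstar + w) : ℝ →ᵃ[ℝ] _) := by
      funext t
      simp [hφ, AffineMap.lineMap_apply, add_sub_cancel_left, add_comm]
    rw [he]
    simpa using h
  have hψ0 : ψ 0 = 0 := by simp [hψ, hg0]
  have hψpos : ∀ t : ℝ, 0 < t → 0 ≤ ψ t := by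
    intro t ht
    have hslope : slope φ 0 t ≤ deriv φ t :=
      hφconv.slope_le_deriv (Set.mem_univ 0) (Set.mem_univ t) ht (hφd t).differentiableAt
    have hd : deriv φ t = ψ t := (hφd t).deriv
    have h0 : 0 ≤ slope φ 0 t := by
      rw [slope_def_field]
      apply div_nonneg _ (by linarith)
      have : φ 0 = F ξstar := by simp [hφ]
      rw [this]
      simpa using sub_nonneg.mpr (hmin (ξstar + t • w))
    linarith [hslope, hd ▸ hslope, h0]
  have htend := hasDerivAt_iff_tendsto_slope.mp hψd
  have htend' : Filter.Tendsto (slope ψ 0) (nhdsWithin 0 (Set.Ioi 0))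
      (nhds (inner ℝ ((Matrix.toEuclideanCLM (𝕜 := ℝ) (H ξstar)) w) w : ℝ)) :=
    htend.mono_left (nhdsWithin_mono 0 (fun t ht => ne_of_gt ht))
  refine ge_of_tendsto htend' ?_
  filter_upwards [self_mem_nhdsWithin] with t ht
  rw [slope_def_field, hψ0]
  exact div_nonneg (by simpa using hψpos t ht) (by simpa using (le_of_lt ht))

end aux3

section aux4
variable {d : ℕ}

lemma aux_Tadd (A : Matrix (Fin d) (Fin d) ℝ) (β : ℝ) (x : EuclideanSpace ℝ (Fin d)) :
    (Matrix.toEuclideanCLM (𝕜 := ℝ) (A + β • (1 : Matrix (Fin d) (Fin d) ℝ))) x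
      = (Matrix.toEuclideanCLM (𝕜 := ℝ) A) x + β • x := by
  rw [map_add, map_smul, map_one]
  simp

lemma aux_isunit
    (A : Matrix (Fin d) (Fin d) ℝ)
    (hPSD : ∀ w : EuclideanSpace ℝ (Fin d), 0 ≤ (inner ℝ ((Matrix.toEuclideanCLM (𝕜 := ℝ) A) w) w : ℝ))
    (β : ℝ) (hβ : 0 < β) :
    IsUnit (A + β • (1 : Matrix (Fin d) (Fin d) ℝ)).det := by
  set M := A + β • (1 : Matrix (Fin d) (Fin d) ℝ) with hM
  rw [isUnit_iff_ne_zero]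
  intro hdet
  obtain ⟨w, hw0, hMw⟩ := (Matrix.exists_mulVec_eq_zero_iff).mpr hdet
  set x : EuclideanSpace ℝ (Fin d) := (WithLp.equiv 2 _).symm w with hx
  have hx0 : x ≠ 0 := fun h => hw0 (by simpa [hx] using congrArg (WithLp.equiv 2 _) h)
  have hTx : (Matrix.toEuclideanCLM (𝕜 := ℝ) M) x = 0 := by
    rw [hx]
    show Matrix.toEuclideanCLM (𝕜 := ℝ) M (WithLp.toLp 2 w) = 0
    rw [Matrix.toEuclideanCLM_toLp, hMw]
    simp
  have h1 : (0:ℝ) = inner ℝ ((Matrix.toEuclideanCLM (𝕜 := ℝ) M) x) x := by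
    rw [hTx]; simp
  rw [hM, aux_Tadd, inner_add_left, real_inner_smul_left, real_inner_self_eq_norm_sq] at h1
  have h2 : 0 < β * ‖x‖ ^ 2 := by have hxp : 0 < ‖x‖ := norm_pos_iff.mpr hx0; positivity
  linarith [hPSD x]

end aux4

theorem ipg_one_update_error_bound
    {d : ℕ}
    (F : EuclideanSpace ℝ (Fin d) → ℝ)
    (g : EuclideanSpace ℝ (Fin d) → EuclideanSpace ℝ (Fin d))
    (H : EuclideanSpace ℝ (Fin d) → Matrix (Fin d) (Fin d) ℝ)
    (hFconv : ConvexOn ℝ Set.univ F)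
    (hgrad : ∀ ξ, HasGradientAt F (g ξ) ξ)
    (hHess : ∀ ξ, HasFDerivAt g (Matrix.toEuclideanCLM (𝕜 := ℝ) (H ξ)) ξ)
    (hHcont : Continuous H)
    (ξstar : EuclideanSpace ℝ (Fin d))
    (hmin : ∀ ξ, F ξstar ≤ F ξ)
    (γ : ℝ) (hγ : 0 < γ)
    (hHlip : ∀ ξ₁ ξ₂, ‖H ξ₁ - H ξ₂‖ ≤ γ * ‖ξ₁ - ξ₂‖)
    (q : ℝ) (hq : 0 < q) (hHq : ‖H ξstar‖ ≤ q)
    (l : ℝ) (hl : 0 < l)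
    (hglip : ∀ ξ₁ ξ₂, ‖g ξ₁ - g ξ₂‖ ≤ l * ‖ξ₁ - ξ₂‖)
    (β : ℝ) (hβ : 0 < β) (δ : ℝ) (hδ : 0 < δ)
    (Kstar : Matrix (Fin d) (Fin d) ℝ)
    (hKstar : Kstar = (H ξstar + β • (1 : Matrix (Fin d) (Fin d) ℝ))⁻¹)
    (η : ℝ) (hη : η = ‖Kstar‖) :
    ∀ (ξ : EuclideanSpace ℝ (Fin d)) (K : Matrix (Fin d) (Fin d) ℝ),
      ‖(ξ - δ • (Matrix.toEuclideanCLM (𝕜 := ℝ) K) (g ξ)) - ξstar‖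
        ≤ δ * η * γ / 2 * ‖ξ - ξstar‖ ^ 2 + η * q * |1 - δ| * ‖ξ - ξstar‖
          + η * β * ‖ξ - ξstar‖ + δ * l * ‖K - Kstar‖ * ‖ξ - ξstar‖ := by
  intro ξ K
  set v := ξ - ξstar with hv
  set M := H ξstar + β • (1 : Matrix (Fin d) (Fin d) ℝ) with hM
  have hg0 : g ξstar = 0 := aux_g0 F g hgrad ξstar hmin
  have hdet : IsUnit M.det :=
    aux_isunit (H ξstar) (fun w => aux_psd F g H hFconv hgrad hHess ξstar hmin w) β hβ
  have hKM : Kstar * M = 1 := by rw [hKstar]; exact Matrix.nonsing_inv_mul M hdet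
  have hKMx : ∀ x : EuclideanSpace ℝ (Fin d),
      (Matrix.toEuclideanCLM (𝕜 := ℝ) Kstar) ((Matrix.toEuclideanCLM (𝕜 := ℝ) M) x) = x := by
    intro x
    calc (Matrix.toEuclideanCLM (𝕜 := ℝ) Kstar) ((Matrix.toEuclideanCLM (𝕜 := ℝ) M) x)
        = ((Matrix.toEuclideanCLM (𝕜 := ℝ) Kstar) * (Matrix.toEuclideanCLM (𝕜 := ℝ) M)) x := rfl
      _ = (Matrix.toEuclideanCLM (𝕜 := ℝ) (Kstar * M)) x := by rw [map_mul]
      _ = x := by rw [hKM, map_one, ContinuousLinearMap.one_apply]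
  set R : EuclideanSpace ℝ (Fin d) := g ξ - (Matrix.toEuclideanCLM (𝕜 := ℝ) (H ξstar)) v with hRdef
  have hR : ‖R‖ ≤ γ / 2 * ‖v‖ ^ 2 := by
    have h := aux_taylor g H hHess hHcont γ hγ.le hHlip ξstar ξ
    rw [hg0, sub_zero] at h
    exact h
  have hE : (1 - δ) • ((Matrix.toEuclideanCLM (𝕜 := ℝ) (H ξstar)) v) + β • v - δ • R
      = (Matrix.toEuclideanCLM (𝕜 := ℝ) M) v - δ • g ξ := by
    rw [hM, aux_Tadd, hRdef]
    module
  have hKE : (Matrix.toEuclideanCLM (𝕜 := ℝ) Kstar)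
        ((1 - δ) • ((Matrix.toEuclideanCLM (𝕜 := ℝ) (H ξstar)) v) + β • v - δ • R)
      = v - δ • (Matrix.toEuclideanCLM (𝕜 := ℝ) Kstar) (g ξ) := by
    rw [hE, map_sub, ContinuousLinearMap.map_smul, hKMx]
  have hTKdiff : (Matrix.toEuclideanCLM (𝕜 := ℝ) (K - Kstar)) (g ξ)
      = (Matrix.toEuclideanCLM (𝕜 := ℝ) K) (g ξ)
        - (Matrix.toEuclideanCLM (𝕜 := ℝ) Kstar) (g ξ) := by
    rw [map_sub, ContinuousLinearMap.sub_apply]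
  have hdecomp : (ξ - δ • (Matrix.toEuclideanCLM (𝕜 := ℝ) K) (g ξ)) - ξstar
      = (Matrix.toEuclideanCLM (𝕜 := ℝ) Kstar)
          ((1 - δ) • ((Matrix.toEuclideanCLM (𝕜 := ℝ) (H ξstar)) v) + β • v - δ • R)
        - δ • ((Matrix.toEuclideanCLM (𝕜 := ℝ) (K - Kstar)) (g ξ)) := by
    rw [hKE, hTKdiff, hv]
    module
  have hgv : ‖g ξ‖ ≤ l * ‖v‖ := by
    have h := hglip ξ ξstar
    rw [hg0, sub_zero] at h
    exact h
  have nTH : ‖(Matrix.toEuclideanCLM (𝕜 := ℝ) (H ξstar)) v‖ ≤ q * ‖v‖ :=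
    (aux_opbound _ _).trans (mul_le_mul_of_nonneg_right hHq (norm_nonneg v))
  have nE : ‖(1 - δ) • ((Matrix.toEuclideanCLM (𝕜 := ℝ) (H ξstar)) v) + β • v - δ • R‖
      ≤ |1 - δ| * (q * ‖v‖) + β * ‖v‖ + δ * (γ / 2 * ‖v‖ ^ 2) := by
    refine ((norm_sub_le _ _).trans (add_le_add (norm_add_le _ _) le_rfl)).trans ?_
    refine add_le_add (add_le_add ?_ ?_) ?_
    · rw [norm_smul, Real.norm_eq_abs]
      exact mul_le_mul_of_nonneg_left nTH (abs_nonneg _)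
    · rw [norm_smul, Real.norm_eq_abs, abs_of_pos hβ]
    · rw [norm_smul, Real.norm_eq_abs, abs_of_pos hδ]
      exact mul_le_mul_of_nonneg_left hR hδ.le
  have nB : ‖δ • ((Matrix.toEuclideanCLM (𝕜 := ℝ) (K - Kstar)) (g ξ))‖
      ≤ δ * (‖K - Kstar‖ * (l * ‖v‖)) := by
    rw [norm_smul, Real.norm_eq_abs, abs_of_pos hδ]
    refine mul_le_mul_of_nonneg_left ((aux_opbound _ _).trans ?_) hδ.le
    exact mul_le_mul_of_nonneg_left hgv (norm_nonneg _)
  rw [hdecomp]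
  calc ‖(Matrix.toEuclideanCLM (𝕜 := ℝ) Kstar)
          ((1 - δ) • ((Matrix.toEuclideanCLM (𝕜 := ℝ) (H ξstar)) v) + β • v - δ • R)
        - δ • ((Matrix.toEuclideanCLM (𝕜 := ℝ) (K - Kstar)) (g ξ))‖
      ≤ ‖(Matrix.toEuclideanCLM (𝕜 := ℝ) Kstar)
          ((1 - δ) • ((Matrix.toEuclideanCLM (𝕜 := ℝ) (H ξstar)) v) + β • v - δ • R)‖
        + ‖δ • ((Matrix.toEuclideanCLM (𝕜 := ℝ) (K - Kstar)) (g ξ))‖ := norm_sub_le _ _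
    _ ≤ ‖Kstar‖ * (|1 - δ| * (q * ‖v‖) + β * ‖v‖ + δ * (γ / 2 * ‖v‖ ^ 2))
        + δ * (‖K - Kstar‖ * (l * ‖v‖)) :=
        add_le_add ((aux_opbound _ _).trans
          (mul_le_mul_of_nonneg_left nE (norm_nonneg _))) nB
    _ = δ * η * γ / 2 * ‖v‖ ^ 2 + η * q * |1 - δ| * ‖v‖ + η * β * ‖v‖
        + δ * l * ‖K - Kstar‖ * ‖v‖ := by rw [hη]; ring
end

section
/- Under the stated MHE setting, if for every ξ = (x₀,…,x_N) ∈ ℝ^{(N+1)n} and every i = 0,…,N−1 the 2n×2n matrix H̿_i(ξ) is positive semidefinite, then the MHE objective F is convex on ℝ^{(N+1)n}. -/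
open Matrix

/-- The `i`-th block of length `n` of a vector in `ℝ^{(N+1)n}`. -/
def blk {n N : ℕ} (ξ : Fin (N + 1) × Fin n → ℝ) (i : Fin (N + 1)) : Fin n → ℝ :=
  fun a => ξ (i, a)

/-- Quadratic form `vᵀ M v`. -/
def quadForm {ι : Type*} [Fintype ι] (M : Matrix ι ι ℝ) (v : ι → ℝ) : ℝ :=
  v ⬝ᵥ M.mulVec v

/-- Jacobian matrix of `x ↦ f x u` at `x`. -/
noncomputable def jacF {n m : ℕ} (f : (Fin n → ℝ) → (Fin m → ℝ) → (Fin n → ℝ))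
    (u : Fin m → ℝ) (x : Fin n → ℝ) : Matrix (Fin n) (Fin n) ℝ :=
  Matrix.of fun i j => fderiv ℝ (fun z => f z u i) x (Pi.single j 1)

/-- Jacobian matrix of `h` at `x`. -/
noncomputable def jacH {n p : ℕ} (h : (Fin n → ℝ) → (Fin p → ℝ)) (x : Fin n → ℝ) :
    Matrix (Fin p) (Fin n) ℝ :=
  Matrix.of fun i j => fderiv ℝ (fun z => h z i) x (Pi.single j 1)

/-- Hessian matrix of a scalar function `φ` at `x`. -/
noncomputable def hessComp {n : ℕ} (φ : (Fin n → ℝ) → ℝ) (x : Fin n → ℝ) :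
    Matrix (Fin n) (Fin n) ℝ :=
  Matrix.of fun a b => fderiv ℝ (fun z => fderiv ℝ φ z (Pi.single b 1)) x (Pi.single a 1)

/-- The MHE objective `F`. -/
noncomputable def mheF {n m p N : ℕ} (f : (Fin n → ℝ) → (Fin m → ℝ) → (Fin n → ℝ))
    (h : (Fin n → ℝ) → (Fin p → ℝ))
    (Q : Matrix (Fin n) (Fin n) ℝ) (R : Matrix (Fin p) (Fin p) ℝ)
    (P : Matrix (Fin n) (Fin n) ℝ)
    (u : Fin N → Fin m → ℝ) (y : Fin N → Fin p → ℝ) (xhat : Fin n → ℝ)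
    (ξ : Fin (N + 1) × Fin n → ℝ) : ℝ :=
  (∑ i : Fin N, quadForm Q⁻¹ (blk ξ i.succ - f (blk ξ i.castSucc) (u i)))
    + (∑ i : Fin N, quadForm R⁻¹ (y i - h (blk ξ i.castSucc)))
    + quadForm P⁻¹ (blk ξ 0 - xhat)

/-- The block `A₁₁^{(i)}`. -/
noncomputable def mheA11 {n m p N : ℕ} (f : (Fin n → ℝ) → (Fin m → ℝ) → (Fin n → ℝ))
    (h : (Fin n → ℝ) → (Fin p → ℝ))
    (Q : Matrix (Fin n) (Fin n) ℝ) (R : Matrix (Fin p) (Fin p) ℝ)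
    (P : Matrix (Fin n) (Fin n) ℝ)
    (u : Fin N → Fin m → ℝ) (y : Fin N → Fin p → ℝ)
    (ξ : Fin (N + 1) × Fin n → ℝ) (i : Fin N) : Matrix (Fin n) (Fin n) ℝ :=
  (jacF f (u i) (blk ξ i.castSucc))ᵀ * Q⁻¹ * jacF f (u i) (blk ξ i.castSucc)
    + (∑ k : Fin n, ((f (blk ξ i.castSucc) (u i) k - blk ξ i.succ k) * Q⁻¹ k k) •
        hessComp (fun z => f z (u i) k) (blk ξ i.castSucc))
    + (jacH h (blk ξ i.castSucc))ᵀ * R⁻¹ * jacH h (blk ξ i.castSucc)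
    + (∑ k : Fin p, ((h (blk ξ i.castSucc) k - y i k) * R⁻¹ k k) •
        hessComp (fun z => h z k) (blk ξ i.castSucc))
    + (if (i : ℕ) = 0 then P⁻¹ else 0)

/-- The `2n × 2n` block matrix `H̿_i(ξ)`. -/
noncomputable def mheHbb {n m p N : ℕ} (f : (Fin n → ℝ) → (Fin m → ℝ) → (Fin n → ℝ))
    (h : (Fin n → ℝ) → (Fin p → ℝ))
    (Q : Matrix (Fin n) (Fin n) ℝ) (R : Matrix (Fin p) (Fin p) ℝ)
    (P : Matrix (Fin n) (Fin n) ℝ)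
    (u : Fin N → Fin m → ℝ) (y : Fin N → Fin p → ℝ)
    (ξ : Fin (N + 1) × Fin n → ℝ) (i : Fin N) :
    Matrix (Fin n ⊕ Fin n) (Fin n ⊕ Fin n) ℝ :=
  Matrix.fromBlocks (mheA11 f h Q R P u y ξ i)
    (-((jacF f (u i) (blk ξ i.castSucc))ᵀ * Q⁻¹))
    (-(Q⁻¹ * jacF f (u i) (blk ξ i.castSucc)))
    Q⁻¹


section Helpers

lemma single_expand {n : ℕ} (d : Fin n → ℝ) : d = ∑ j, d j • (Pi.single j 1 : Fin n → ℝ) := by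
  rw [show (fun (j : Fin n) => d j • (Pi.single j 1 : Fin n → ℝ)) = fun j => Pi.single j (d j) by
    funext j; rw [← Pi.single_smul, smul_eq_mul, mul_one]]
  rw [Finset.univ_sum_single]

lemma fderiv_expand {n : ℕ} (φ : (Fin n → ℝ) → ℝ) (x : Fin n → ℝ) (d : Fin n → ℝ) :
    fderiv ℝ φ x d = ∑ j, d j * fderiv ℝ φ x (Pi.single j 1) := by
  conv_lhs => rw [single_expand d]
  rw [map_sum]
  simp [smul_eq_mul]

lemma quad_combo {ι : Type*} [Fintype ι] (M : Matrix ι ι ℝ) (x y : ι → ℝ) (a b : ℝ)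
    (hab : a + b = 1) :
    a * quadForm M x + b * quadForm M y - quadForm M (a•x + b•y) = a*b* quadForm M (x - y) := by
  have hb : b = 1 - a := by linarith
  subst hb
  simp only [quadForm, Matrix.mulVec_add, Matrix.mulVec_smul, dotProduct_add, add_dotProduct,
    smul_dotProduct, dotProduct_smul, smul_eq_mul, sub_eq_add_neg, Matrix.mulVec_neg,
    dotProduct_neg, neg_dotProduct]
  ring

lemma quadForm_nonneg {ι : Type*} [Fintype ι] {M : Matrix ι ι ℝ} (hM : M.PosSemidef)
    (v : ι → ℝ) : 0 ≤ quadForm M v := by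
  have := (Matrix.posSemidef_iff_dotProduct_mulVec.mp hM).2 v
  simpa [quadForm] using this

lemma convexOn_quad_comp {ι : Type*} [Fintype ι] {M : Matrix ι ι ℝ} (hM : M.PosSemidef)
    {E' : Type*} [AddCommGroup E'] [Module ℝ E'] {g : E' → ι → ℝ}
    (hg : ∀ x y (a b : ℝ), a + b = 1 → g (a•x + b•y) = a•g x + b•g y) :
    ConvexOn ℝ Set.univ (fun ξ => quadForm M (g ξ)) := by
  refine ⟨convex_univ, fun x _ y _ a b ha hb hab => ?_⟩
  show quadForm M (g (a•x + b•y)) ≤ a • quadForm M (g x) + b • quadForm M (g y)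
  rw [hg x y a b hab]
  have h1 := quad_combo M (g x) (g y) a b hab
  have h2 := quadForm_nonneg hM (g x - g y)
  have h3 : 0 ≤ a * b * quadForm M (g x - g y) := by positivity
  simp only [smul_eq_mul]
  linarith

lemma convexOn_of_line {E' : Type*} [AddCommGroup E'] [Module ℝ E'] {G : E' → ℝ}
    (hG : ∀ x d : E', ConvexOn ℝ Set.univ (fun t : ℝ => G (x + t • d))) :
    ConvexOn ℝ Set.univ G := by
  refine ⟨convex_univ, fun x _ y _ a b ha hb hab => ?_⟩
  have h := (hG x (y - x)).2 (Set.mem_univ (0:ℝ)) (Set.mem_univ (1:ℝ)) ha hb hab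
  simp only [smul_eq_mul, mul_zero, mul_one, zero_add, zero_smul, add_zero, one_smul] at h
  have e1 : x + b • (y - x) = a • x + b • y := by
    have : a = 1 - b := by linarith
    subst this
    simp [smul_sub, sub_smul]
    abel
  have e2 : x + (y - x) = y := by abel
  rw [e1, e2] at h
  simpa using h

lemma convexOn_sum_univ {α : Type*} {E' : Type*} [AddCommGroup E'] [Module ℝ E']
    (s : Finset α) (F : α → E' → ℝ) (h : ∀ a ∈ s, ConvexOn ℝ Set.univ (F a)) :
    ConvexOn ℝ Set.univ (fun x => ∑ a ∈ s, F a x) := by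
  classical
  induction s using Finset.cons_induction with
  | empty => simpa using convexOn_const (0:ℝ) convex_univ
  | cons a s ha ih =>
      simp only [Finset.sum_cons]
      exact (h a (Finset.mem_cons_self a s)).add
        (ih fun b hb => h b (Finset.mem_cons_of_mem hb))

lemma hasDerivAt_line {n : ℕ} {φ : (Fin n → ℝ) → ℝ} (hφ : Differentiable ℝ φ)
    (x d : Fin n → ℝ) (t : ℝ) :
    HasDerivAt (fun s : ℝ => φ (x + s • d)) (fderiv ℝ φ (x + t • d) d) t := by
  have hl : HasDerivAt (fun s : ℝ => x + s • d) d t := by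
    simpa using ((hasDerivAt_id t).smul_const d).const_add x
  exact (hφ _).hasFDerivAt.comp_hasDerivAt t hl

lemma contDiff_fderiv_apply {n : ℕ} {φ : (Fin n → ℝ) → ℝ} (hφ : ContDiff ℝ 2 φ)
    (d : Fin n → ℝ) : ContDiff ℝ 1 (fun z => fderiv ℝ φ z d) :=
  (hφ.fderiv_right (by norm_num)).clm_apply contDiff_const

lemma hessComp_eq {n : ℕ} {φ : (Fin n → ℝ) → ℝ} (hφ : ContDiff ℝ 2 φ) (x : Fin n → ℝ)
    (a b : Fin n) :
    hessComp φ x a b = (fderiv ℝ (fderiv ℝ φ) x) (Pi.single a 1) (Pi.single b 1) := by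
  have hd : DifferentiableAt ℝ (fderiv ℝ φ) x :=
    ((hφ.fderiv_right (m := 1) (by norm_num)).differentiable (by norm_num)).differentiableAt
  have := fderiv_clm_apply (x := x) (c := fderiv ℝ φ) (u := fun _ => (Pi.single b 1 : Fin n → ℝ))
    hd (differentiableAt_const _)
  simp only [hessComp, Matrix.of_apply]
  rw [this]
  simp

lemma hessComp_symm {n : ℕ} {φ : (Fin n → ℝ) → ℝ} (hφ : ContDiff ℝ 2 φ) (x : Fin n → ℝ)
    (a b : Fin n) : hessComp φ x a b = hessComp φ x b a := by
  rw [hessComp_eq hφ, hessComp_eq hφ]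
  exact second_derivative_symmetric
    (fun y => ((hφ.differentiable (by norm_num)) y).hasFDerivAt)
    (((hφ.fderiv_right (m := 1) (by norm_num)).differentiable (by norm_num)) x).hasFDerivAt _ _

lemma fderiv2_expand {n : ℕ} {φ : (Fin n → ℝ) → ℝ} (hφ : ContDiff ℝ 2 φ)
    (x d d' : Fin n → ℝ) :
    fderiv ℝ (fun z => fderiv ℝ φ z d) x d' =
      ∑ b, d b * ∑ a, d' a * hessComp φ x a b := by
  have hrw : (fun z => fderiv ℝ φ z d)
      = fun z => ∑ b, d b * fderiv ℝ φ z (Pi.single b 1) := by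
    funext z; exact fderiv_expand φ z d
  rw [hrw]
  have hdiff : ∀ b : Fin n, DifferentiableAt ℝ (fun z => fderiv ℝ φ z (Pi.single b 1)) x :=
    fun b => ((contDiff_fderiv_apply hφ _).differentiable one_ne_zero).differentiableAt
  rw [fderiv_fun_sum (fun b _ => ((hdiff b).const_mul (d b)))]
  rw [ContinuousLinearMap.sum_apply]
  refine Finset.sum_congr rfl fun b _ => ?_
  rw [fderiv_const_mul (hdiff b)]
  simp only [ContinuousLinearMap.smul_apply, smul_eq_mul]
  congr 1
  exact fderiv_expand _ x d'

lemma affine_of_hess_zero {n : ℕ} {φ : (Fin n → ℝ) → ℝ} (hφ : ContDiff ℝ 2 φ)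
    (hz : ∀ z, hessComp φ z = 0) :
    ∀ x, φ x = φ 0 + fderiv ℝ φ 0 x := by
  have hdiff : Differentiable ℝ φ := hφ.differentiable (by norm_num)
  have hgb : ∀ (b : Fin n) (z : Fin n → ℝ),
      fderiv ℝ φ z (Pi.single b 1) = fderiv ℝ φ 0 (Pi.single b 1) := by
    intro b z
    refine is_const_of_fderiv_eq_zero
      ((contDiff_fderiv_apply hφ _).differentiable one_ne_zero) (fun w => ?_) z 0
    ext v
    rw [fderiv_expand _ w v]
    have : ∀ a : Fin n, hessComp φ w a b = 0 := fun a => by rw [hz w]; rfl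
    simp only [hessComp, Matrix.of_apply] at this
    simp [this]
  have hconst : ∀ z, fderiv ℝ φ z = fderiv ℝ φ 0 := by
    intro z; ext v
    rw [fderiv_expand φ z v, fderiv_expand φ 0 v]
    exact Finset.sum_congr rfl fun b _ => by rw [hgb b z]
  intro x
  have hψ : ∀ z w : Fin n → ℝ, φ z - fderiv ℝ φ 0 z = φ w - fderiv ℝ φ 0 w := by
    refine is_const_of_fderiv_eq_zero (f := fun z => φ z - fderiv ℝ φ 0 z)
      (fun z => (hdiff z).sub ((fderiv ℝ φ 0).differentiable z))
      (fun z => ?_)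
    rw [fderiv_fun_sub (hdiff z) ((fderiv ℝ φ 0).differentiableAt)]
    rw [(fderiv ℝ φ 0).fderiv, hconst z, sub_self]
  have := hψ x 0
  simp only [map_zero, sub_zero] at this
  linarith

lemma posdef_diag_pos {ι : Type*} [Fintype ι] [DecidableEq ι] {M : Matrix ι ι ℝ}
    (hM : M.PosDef) (k : ι) : 0 < M k k := by
  have := (Matrix.posDef_iff_dotProduct_mulVec.mp hM).2 (x := Pi.single k 1) (by simp [Pi.single_eq_same, Function.ne_iff])
  simpa [dotProduct, Matrix.mulVec, Pi.single_apply, Finset.sum_ite_eq] using this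

lemma dot_mulVec_assoc {ι κ ι' : Type*} [Fintype ι] [Fintype κ] [Fintype ι'] (J : Matrix κ ι ℝ)
    (M : Matrix κ ι' ℝ) (w : ι → ℝ) (v : ι' → ℝ) :
    (J *ᵥ w) ⬝ᵥ M *ᵥ v = w ⬝ᵥ (Jᵀ * M) *ᵥ v := by
  rw [← Matrix.mulVec_mulVec, Matrix.dotProduct_mulVec w, Matrix.vecMul_transpose]

lemma pair_dot {n : ℕ} (M : Matrix (Fin n) (Fin n) ℝ) (a b : Fin n) :
    (Pi.single a 1 : Fin n → ℝ) ⬝ᵥ M *ᵥ (Pi.single b 1 : Fin n → ℝ) = M a b := by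
  simp [dotProduct, Matrix.mulVec, Pi.single_apply, Finset.sum_ite_eq, Finset.sum_ite_eq',
    mul_ite, ite_mul]

lemma sum_quad {n : ℕ} {α : Type*} (s : Finset α) (M : α → Matrix (Fin n) (Fin n) ℝ)
    (v w : Fin n → ℝ) : v ⬝ᵥ (∑ k ∈ s, M k) *ᵥ w = ∑ k ∈ s, v ⬝ᵥ (M k) *ᵥ w := by
  classical
  induction s using Finset.cons_induction with
  | empty => simp [Matrix.zero_mulVec]
  | cons a s ha ih =>
      rw [Finset.sum_cons, Finset.sum_cons, Matrix.add_mulVec, dotProduct_add, ih]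

lemma matrix_zero_of_quad_zero {n : ℕ} {M : Matrix (Fin n) (Fin n) ℝ}
    (hsymm : ∀ a b, M a b = M b a) (hq : ∀ w, w ⬝ᵥ M *ᵥ w = 0) : M = 0 := by
  ext a b
  have h1 := hq (Pi.single a 1 + Pi.single b 1)
  have h2 := hq (Pi.single a 1)
  have h3 := hq (Pi.single b 1)
  rw [Matrix.mulVec_add, dotProduct_add, add_dotProduct, add_dotProduct, pair_dot, pair_dot,
    pair_dot, pair_dot] at h1
  rw [pair_dot] at h2
  rw [pair_dot] at h3
  have hab := hsymm a b
  simp only [Matrix.zero_apply]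
  linarith

lemma diag_dot {ι : Type*} [Fintype ι] [DecidableEq ι] {M : Matrix ι ι ℝ} (hM : M.IsDiag)
    (v v' : ι → ℝ) : v ⬝ᵥ M *ᵥ v' = ∑ k, M k k * v k * v' k := by
  nth_rewrite 1 [← hM.diagonal_diag]
  simp only [Matrix.mulVec_diagonal, dotProduct, Matrix.diag]
  exact Finset.sum_congr rfl fun k _ => by ring

lemma inv_isDiag {ι : Type*} [Fintype ι] [DecidableEq ι] {M : Matrix ι ι ℝ}
    (hM : M.IsDiag) : (M⁻¹).IsDiag := by
  nth_rewrite 1 [← hM.diagonal_diag]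
  rw [Matrix.inv_diagonal]
  exact Matrix.isDiag_diagonal _

lemma jacH_mulVec {n p : ℕ} (h : (Fin n → ℝ) → (Fin p → ℝ)) (z d : Fin n → ℝ) (k : Fin p) :
    (jacH h z *ᵥ d) k = fderiv ℝ (fun x => h x k) z d := by
  rw [fderiv_expand]
  simp only [jacH, Matrix.mulVec, dotProduct, Matrix.of_apply]
  exact Finset.sum_congr rfl fun j _ => by ring

lemma quad_hess {n : ℕ} {φ : (Fin n → ℝ) → ℝ} (hφ : ContDiff ℝ 2 φ) (z d : Fin n → ℝ) :
    d ⬝ᵥ (hessComp φ z) *ᵥ d = fderiv ℝ (fun x => fderiv ℝ φ x d) z d := by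
  rw [fderiv2_expand hφ]
  simp only [dotProduct, Matrix.mulVec, Finset.mul_sum]
  rw [Finset.sum_comm]
  exact Finset.sum_congr rfl fun b _ => Finset.sum_congr rfl fun a _ => by
    simp only [hessComp, Matrix.of_apply]; ring

end Helpers

lemma key_ineq {n m p N : ℕ} {f : (Fin n → ℝ) → (Fin m → ℝ) → (Fin n → ℝ)}
    {h : (Fin n → ℝ) → (Fin p → ℝ)}
    {Q : Matrix (Fin n) (Fin n) ℝ} {R : Matrix (Fin p) (Fin p) ℝ}
    {P : Matrix (Fin n) (Fin n) ℝ}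
    {u : Fin N → Fin m → ℝ} {y : Fin N → Fin p → ℝ}
    (hQpd : Q.PosDef)
    (hpsd : ∀ (ξ : Fin (N + 1) × Fin n → ℝ) (i : Fin N),
      (mheHbb f h Q R P u y ξ i).PosSemidef)
    (i : Fin N) (z : Fin n → ℝ) (w : Fin n → ℝ) :
    (∀ k : Fin n, w ⬝ᵥ (hessComp (fun x => f x (u i) k) z) *ᵥ w = 0) ∧
    0 ≤ w ⬝ᵥ ((jacH h z)ᵀ * R⁻¹ * jacH h z
        + (∑ k : Fin p, ((h z k - y i k) * R⁻¹ k k) • hessComp (fun x => h x k) z)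
        + (if (i : ℕ) = 0 then P⁻¹ else 0)) *ᵥ w := by
  have hne : i.castSucc ≠ i.succ := (Fin.castSucc_lt_succ (i := i)).ne
  -- the master inequality, for each shift c
  have master : ∀ c : Fin n → ℝ,
      0 ≤ (∑ k : Fin n, (-(c k) * Q⁻¹ k k) * (w ⬝ᵥ (hessComp (fun x => f x (u i) k) z) *ᵥ w))
        + w ⬝ᵥ ((jacH h z)ᵀ * R⁻¹ * jacH h z
            + (∑ k : Fin p, ((h z k - y i k) * R⁻¹ k k) • hessComp (fun x => h x k) z)
            + (if (i : ℕ) = 0 then P⁻¹ else 0)) *ᵥ w := by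
    intro c
    set ξ : Fin (N + 1) × Fin n → ℝ := fun q =>
      if q.1 = i.castSucc then z q.2 else if q.1 = i.succ then f z (u i) q.2 + c q.2 else 0
      with hξ
    have hb1 : blk ξ i.castSucc = z := by funext a; simp [blk, hξ]
    have hb2 : blk ξ i.succ = f z (u i) + c := by
      funext a; simp [blk, hξ, hne.symm]
    have hv := (Matrix.posSemidef_iff_dotProduct_mulVec.mp (hpsd ξ i)).2 (Sum.elim w (jacF f (u i) z *ᵥ w))
    rw [star_trivial] at hv
    set J := jacF f (u i) z with hJ
    rw [mheHbb, hb1] at hv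
    rw [show (Sum.elim w (J *ᵥ w)) = (w ⊕ᵥ (J *ᵥ w)) from rfl] at hv
    rw [Matrix.fromBlocks_mulVec] at hv
    simp only [Sum.elim_comp_inl, Sum.elim_comp_inr] at hv
    rw [sumElim_dotProduct_sumElim] at hv
    rw [dotProduct_add, dotProduct_add] at hv
    have t2 : w ⬝ᵥ (-(Jᵀ * Q⁻¹)) *ᵥ (J *ᵥ w) = -(w ⬝ᵥ (Jᵀ * Q⁻¹ * J) *ᵥ w) := by
      rw [Matrix.mulVec_mulVec, neg_mul, Matrix.neg_mulVec, dotProduct_neg]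
    have t3 : (J *ᵥ w) ⬝ᵥ (-(Q⁻¹ * J)) *ᵥ w = -(w ⬝ᵥ (Jᵀ * Q⁻¹ * J) *ᵥ w) := by
      rw [Matrix.neg_mulVec, dotProduct_neg, dot_mulVec_assoc, Matrix.mul_assoc]
    have t4 : (J *ᵥ w) ⬝ᵥ Q⁻¹ *ᵥ (J *ᵥ w) = w ⬝ᵥ (Jᵀ * Q⁻¹ * J) *ᵥ w := by
      rw [dot_mulVec_assoc, Matrix.mulVec_mulVec, Matrix.mul_assoc]
    rw [t2, t3, t4] at hv
    rw [mheA11, hb1, hb2] at hv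
    rw [← hJ] at hv
    simp only [Matrix.add_mulVec, dotProduct_add] at hv
    have hcoef : ∀ k : Fin n, (f z (u i) k - (f z (u i) + c) k) = -(c k) := by
      intro k; simp
    have hsum : w ⬝ᵥ (∑ k : Fin n, ((f z (u i) k - (f z (u i) + c) k) * Q⁻¹ k k) •
        hessComp (fun x => f x (u i) k) z) *ᵥ w
        = ∑ k : Fin n, (-(c k) * Q⁻¹ k k) * (w ⬝ᵥ (hessComp (fun x => f x (u i) k) z) *ᵥ w) := by
      rw [sum_quad]
      refine Finset.sum_congr rfl fun k _ => ?_
      rw [hcoef k, Matrix.smul_mulVec, dotProduct_smul, smul_eq_mul]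
    rw [hsum] at hv
    simp only [Matrix.add_mulVec, dotProduct_add]
    linarith
  constructor
  · intro k
    by_contra hX
    have hq : 0 < Q⁻¹ k k := posdef_diag_pos hQpd.inv k
    set X := w ⬝ᵥ (hessComp (fun x => f x (u i) k) z) *ᵥ w with hXdef
    set S := w ⬝ᵥ ((jacH h z)ᵀ * R⁻¹ * jacH h z
        + (∑ k : Fin p, ((h z k - y i k) * R⁻¹ k k) • hessComp (fun x => h x k) z)
        + (if (i : ℕ) = 0 then P⁻¹ else 0)) *ᵥ w with hSdef
    have habs : ∀ t : ℝ, 0 ≤ -(t * (Q⁻¹ k k * X)) + S := by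
      intro t
      have := master (t • (Pi.single k 1 : Fin n → ℝ))
      have hsum : (∑ j : Fin n, (-(((t • (Pi.single k 1 : Fin n → ℝ)) j)) * Q⁻¹ j j) *
          (w ⬝ᵥ (hessComp (fun x => f x (u i) j) z) *ᵥ w))
          = -(t * (Q⁻¹ k k * X)) := by
        rw [Finset.sum_eq_single k]
        · simp [hXdef, Pi.single_eq_same, mul_assoc]
        · intro j _ hj
          simp [Pi.single_eq_of_ne hj]
        · simp
      rw [hsum] at this
      exact this
    rcases lt_or_gt_of_ne (mul_ne_zero hq.ne' hX) with hlt | hgt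
    · have := habs ((S + 1) / (Q⁻¹ k k * X))
      rw [div_mul_cancel₀ _ (mul_ne_zero hq.ne' hX)] at this
      linarith
    · have := habs ((S + 1) / (Q⁻¹ k k * X))
      rw [div_mul_cancel₀ _ (mul_ne_zero hq.ne' hX)] at this
      linarith
  · have := master 0
    simpa using this


/-- Convexity of `x ↦ (yv - h x)ᵀ R⁻¹ (yv - h x) + (x - xhat)ᵀ W (x - xhat)`
given the pointwise Hessian PSD condition. -/
lemma convexOn_G {n p : ℕ} {h : (Fin n → ℝ) → (Fin p → ℝ)} (hh : ContDiff ℝ 2 h)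
    {Rinv : Matrix (Fin p) (Fin p) ℝ} (hRd : Rinv.IsDiag)
    (W : Matrix (Fin n) (Fin n) ℝ)
    (yv : Fin p → ℝ) (xhat : Fin n → ℝ)
    (hkey : ∀ z w : Fin n → ℝ, 0 ≤ w ⬝ᵥ ((jacH h z)ᵀ * Rinv * jacH h z
        + (∑ k : Fin p, ((h z k - yv k) * Rinv k k) • hessComp (fun x => h x k) z) + W) *ᵥ w) :
    ConvexOn ℝ Set.univ (fun x => quadForm Rinv (yv - h x) + quadForm W (x - xhat)) := by
  -- reduce to lines
  have hhk : ∀ k : Fin p, ContDiff ℝ 2 (fun x => h x k) := fun k => (contDiff_pi.mp hh k)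
  have hline : ∀ x d : Fin n → ℝ, ConvexOn ℝ Set.univ
      (fun t : ℝ => quadForm Rinv (yv - h (x + t • d)) + quadForm W ((x + t • d) - xhat)) := by
    intro x d
    set c := x - xhat with hc
    -- notation
    set D0 : Fin p → ℝ → ℝ := fun k t => h (x + t • d) k with hD0
    set D1 : Fin p → ℝ → ℝ := fun k t => fderiv ℝ (fun z => h z k) (x + t • d) d with hD1
    set D2 : Fin p → ℝ → ℝ := fun k t =>
      fderiv ℝ (fun z => fderiv ℝ (fun z' => h z' k) z d) (x + t • d) d with hD2
    set g : ℝ → ℝ := fun t => (∑ k, Rinv k k * ((yv k - D0 k t) * (yv k - D0 k t)))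
      + ((c ⬝ᵥ W *ᵥ c) + ((c ⬝ᵥ W *ᵥ d) + (d ⬝ᵥ W *ᵥ c)) * t + (d ⬝ᵥ W *ᵥ d) * (t * t))
      with hg
    set g1 : ℝ → ℝ := fun t => (∑ k, Rinv k k *
        ((-(D1 k t)) * (yv k - D0 k t) + (yv k - D0 k t) * (-(D1 k t))))
      + (((c ⬝ᵥ W *ᵥ d) + (d ⬝ᵥ W *ᵥ c)) + (d ⬝ᵥ W *ᵥ d) * (2 * t)) with hg1
    set g2 : ℝ → ℝ := fun t => (∑ k, Rinv k k *
        (((-(D2 k t)) * (yv k - D0 k t) + (-(D1 k t)) * (-(D1 k t)))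
          + ((-(D1 k t)) * (-(D1 k t)) + (yv k - D0 k t) * (-(D2 k t)))))
      + (d ⬝ᵥ W *ᵥ d) * 2 with hg2
    have hgeq : (fun t : ℝ => quadForm Rinv (yv - h (x + t • d))
        + quadForm W ((x + t • d) - xhat)) = g := by
      funext t
      have e1 : quadForm Rinv (yv - h (x + t • d))
          = ∑ k, Rinv k k * ((yv k - D0 k t) * (yv k - D0 k t)) := by
        rw [quadForm, diag_dot hRd]
        exact Finset.sum_congr rfl fun k _ => by simp only [Pi.sub_apply, hD0]; ring
      have e2 : (x + t • d) - xhat = c + t • d := by rw [hc]; abel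
      have e3 : quadForm W (c + t • d) = (c ⬝ᵥ W *ᵥ c)
          + ((c ⬝ᵥ W *ᵥ d) + (d ⬝ᵥ W *ᵥ c)) * t + (d ⬝ᵥ W *ᵥ d) * (t * t) := by
        simp only [quadForm, Matrix.mulVec_add, Matrix.mulVec_smul, dotProduct_add,
          add_dotProduct, smul_dotProduct, dotProduct_smul, smul_eq_mul]
        ring
      rw [e1, e2, e3, hg]
    rw [hgeq]
    -- derivatives
    have hD0d : ∀ k t, HasDerivAt (D0 k) (D1 k t) t := fun k t =>
      hasDerivAt_line ((hhk k).differentiable (by norm_num)) x d t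
    have hD1d : ∀ k t, HasDerivAt (D1 k) (D2 k t) t := fun k t =>
      hasDerivAt_line ((contDiff_fderiv_apply (hhk k) d).differentiable one_ne_zero) x d t
    have hgd : ∀ t, HasDerivAt g (g1 t) t := by
      intro t
      apply HasDerivAt.add
      · have : ∀ k : Fin p, HasDerivAt (fun t => Rinv k k * ((yv k - D0 k t) * (yv k - D0 k t)))
            (Rinv k k * ((-(D1 k t)) * (yv k - D0 k t) + (yv k - D0 k t) * (-(D1 k t)))) t := by
          intro k
          exact (((hD0d k t).const_sub (yv k)).mul ((hD0d k t).const_sub (yv k))).const_mul _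
        have hs : HasDerivAt (fun s => ∑ k, Rinv k k * ((yv k - D0 k s) * (yv k - D0 k s)))
            (∑ k, Rinv k k * ((-(D1 k t)) * (yv k - D0 k t) + (yv k - D0 k t) * (-(D1 k t)))) t :=
          HasDerivAt.fun_sum (fun k _ => this k)
        exact hs
      · have h1 : HasDerivAt (fun t : ℝ => (c ⬝ᵥ W *ᵥ c)
            + ((c ⬝ᵥ W *ᵥ d) + (d ⬝ᵥ W *ᵥ c)) * t + (d ⬝ᵥ W *ᵥ d) * (t * t))
            (0 + ((c ⬝ᵥ W *ᵥ d) + (d ⬝ᵥ W *ᵥ c)) * 1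
              + (d ⬝ᵥ W *ᵥ d) * (1 * t + t * 1)) t := by
          exact ((hasDerivAt_const t _).add (((hasDerivAt_id t).const_mul _))).add
            (((hasDerivAt_id t).mul (hasDerivAt_id t)).const_mul _)
        exact h1.congr_deriv (by ring)
    have hg1d : ∀ t, HasDerivAt g1 (g2 t) t := by
      intro t
      apply HasDerivAt.add
      · exact HasDerivAt.fun_sum (fun k _ =>
          ((((hD1d k t).neg).mul ((hD0d k t).const_sub (yv k))).add
            (((hD0d k t).const_sub (yv k)).mul ((hD1d k t).neg))).const_mul _)
      · have h1 : HasDerivAt (fun t : ℝ => ((c ⬝ᵥ W *ᵥ d) + (d ⬝ᵥ W *ᵥ c))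
            + (d ⬝ᵥ W *ᵥ d) * (2 * t)) (0 + (d ⬝ᵥ W *ᵥ d) * 2) t := by
          refine (hasDerivAt_const t _).add ?_
          simpa using ((hasDerivAt_id t).const_mul (2:ℝ)).const_mul (d ⬝ᵥ W *ᵥ d)
        simpa using h1
    -- nonnegativity of second derivative
    have hg2nonneg : ∀ t, 0 ≤ g2 t := by
      intro t
      have hk := hkey (x + t • d) d
      rw [Matrix.add_mulVec, Matrix.add_mulVec, dotProduct_add, dotProduct_add] at hk
      have T1 : d ⬝ᵥ ((jacH h (x + t • d))ᵀ * Rinv * jacH h (x + t • d)) *ᵥ d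
          = ∑ k, Rinv k k * (D1 k t) * (D1 k t) := by
        rw [Matrix.mul_assoc, ← dot_mulVec_assoc, ← Matrix.mulVec_mulVec, diag_dot hRd]
        exact Finset.sum_congr rfl fun k _ => by rw [jacH_mulVec]
      have T2 : d ⬝ᵥ (∑ k : Fin p, ((h (x + t • d) k - yv k) * Rinv k k) •
            hessComp (fun x => h x k) (x + t • d)) *ᵥ d
          = ∑ k, ((D0 k t - yv k) * Rinv k k) * (D2 k t) := by
        rw [sum_quad]
        refine Finset.sum_congr rfl fun k _ => ?_
        rw [Matrix.smul_mulVec, dotProduct_smul, smul_eq_mul, quad_hess (hhk k)]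
      rw [T1, T2] at hk
      simp only [hg2]
      have : (∑ k, Rinv k k *
          (((-(D2 k t)) * (yv k - D0 k t) + (-(D1 k t)) * (-(D1 k t)))
            + ((-(D1 k t)) * (-(D1 k t)) + (yv k - D0 k t) * (-(D2 k t)))))
          = 2 * ((∑ k, Rinv k k * (D1 k t) * (D1 k t))
            + (∑ k, ((D0 k t - yv k) * Rinv k k) * (D2 k t))) := by
        rw [mul_add, Finset.mul_sum, Finset.mul_sum, ← Finset.sum_add_distrib]
        exact Finset.sum_congr rfl fun k _ => by ring
      rw [this]
      linarith
    -- conclude 1-D convexity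
    have hgdiff : Differentiable ℝ g := fun t => (hgd t).differentiableAt
    have hderiv : deriv g = g1 := funext fun t => (hgd t).deriv
    refine convexOn_of_deriv2_nonneg convex_univ hgdiff.continuous.continuousOn
      (fun t _ => (hgd t).differentiableAt.differentiableWithinAt) ?_ ?_
    · rw [interior_univ, hderiv]
      exact fun t _ => (hg1d t).differentiableAt.differentiableWithinAt
    · intro t _
      have : deriv^[2] g t = deriv (deriv g) t := by
        simp [Function.iterate_succ, Function.iterate_zero]
      rw [this, hderiv]
      rw [(hg1d t).deriv]
      exact hg2nonneg t
  -- lift to ℝⁿ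
  exact convexOn_of_line hline



lemma convexOn_comp_blk {n N : ℕ} {G : (Fin n → ℝ) → ℝ} (hG : ConvexOn ℝ Set.univ G)
    (j : Fin (N+1)) :
    ConvexOn ℝ Set.univ (fun ξ : Fin (N+1) × Fin n → ℝ => G (blk ξ j)) := by
  refine ⟨convex_univ, fun ξ _ η _ a b ha hb hab => ?_⟩
  have hlin : blk (a • ξ + b • η) j = a • blk ξ j + b • blk η j := rfl
  show G (blk (a • ξ + b • η) j) ≤ a • G (blk ξ j) + b • G (blk η j)
  rw [hlin]
  exact hG.2 (Set.mem_univ _) (Set.mem_univ _) ha hb hab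

theorem mhe_convex_of_blocks_posSemidef
    (n m p N : ℕ) (hn : 1 ≤ n) (hm : 1 ≤ m) (hp : 1 ≤ p) (hN : 1 ≤ N)
    (f : (Fin n → ℝ) → (Fin m → ℝ) → (Fin n → ℝ))
    (hf : ContDiff ℝ 2 (fun q : (Fin n → ℝ) × (Fin m → ℝ) => f q.1 q.2))
    (h : (Fin n → ℝ) → (Fin p → ℝ)) (hh : ContDiff ℝ 2 h)
    (Q : Matrix (Fin n) (Fin n) ℝ) (hQdiag : Q.IsDiag) (hQpd : Q.PosDef)
    (R : Matrix (Fin p) (Fin p) ℝ) (hRdiag : R.IsDiag) (hRpd : R.PosDef)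
    (P : Matrix (Fin n) (Fin n) ℝ) (hP : P.PosDef)
    (u : Fin N → Fin m → ℝ) (y : Fin N → Fin p → ℝ) (xhat : Fin n → ℝ)
    (hpsd : ∀ (ξ : Fin (N + 1) × Fin n → ℝ) (i : Fin N),
      (mheHbb f h Q R P u y ξ i).PosSemidef) :
    ConvexOn ℝ Set.univ (mheF f h Q R P u y xhat) := by
  classical
  set Wm : Fin N → Matrix (Fin n) (Fin n) ℝ := fun i => if (i : ℕ) = 0 then P⁻¹ else 0 with hWm
  have key := fun (i : Fin N) (z w : Fin n → ℝ) => key_ineq hQpd hpsd i z w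
  have hfi : ∀ i : Fin N, ContDiff ℝ 2 (fun x => f x (u i)) := fun i =>
    hf.comp (contDiff_id.prodMk contDiff_const)
  have hfik : ∀ (i : Fin N) (k : Fin n), ContDiff ℝ 2 (fun x => f x (u i) k) :=
    fun i k => contDiff_pi.mp (hfi i) k
  have hhesszero : ∀ (i : Fin N) (k : Fin n) (z : Fin n → ℝ),
      hessComp (fun x => f x (u i) k) z = 0 := fun i k z =>
    matrix_zero_of_quad_zero (fun a b => hessComp_symm (hfik i k) z a b)
      (fun w => (key i z w).1 k)
  have haff : ∀ (i : Fin N) (k : Fin n) (x : Fin n → ℝ),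
      f x (u i) k = f 0 (u i) k + fderiv ℝ (fun x => f x (u i) k) 0 x :=
    fun i k => affine_of_hess_zero (hfik i k) (hhesszero i k)
  have hF : mheF f h Q R P u y xhat = fun ξ =>
      (∑ i : Fin N, quadForm Q⁻¹ (blk ξ i.succ - f (blk ξ i.castSucc) (u i)))
      + ∑ i : Fin N, (quadForm R⁻¹ (y i - h (blk ξ i.castSucc))
          + quadForm (Wm i) (blk ξ i.castSucc - xhat)) := by
    funext ξ
    simp only [mheF]
    rw [Finset.sum_add_distrib]
    have hWsum : ∑ i : Fin N, quadForm (Wm i) (blk ξ i.castSucc - xhat)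
        = quadForm P⁻¹ (blk ξ 0 - xhat) := by
      rw [Finset.sum_eq_single (⟨0, hN⟩ : Fin N)]
      · have h0 : ((⟨0, hN⟩ : Fin N) : ℕ) = 0 := rfl
        have hcs : (⟨0, hN⟩ : Fin N).castSucc = (0 : Fin (N+1)) := by
          apply Fin.ext; simp
        simp only [hWm, h0, if_true, hcs]
      · intro j _ hj
        have hj0 : ¬((j : ℕ) = 0) := fun hc => hj (by apply Fin.ext; simpa using hc)
        simp only [hWm, hj0, if_false]
        simp [quadForm, Matrix.zero_mulVec]
      · intro hmem; exact absurd (Finset.mem_univ _) hmem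
    rw [hWsum]
    ring
  rw [hF]
  have hA : ConvexOn ℝ Set.univ (fun ξ : Fin (N+1) × Fin n → ℝ =>
      ∑ i : Fin N, quadForm Q⁻¹ (blk ξ i.succ - f (blk ξ i.castSucc) (u i))) := by
    apply convexOn_sum_univ
    intro i _
    have hgaff : ∀ (ξ η : Fin (N+1) × Fin n → ℝ) (a b : ℝ), a + b = 1 →
        (fun ζ : Fin (N+1) × Fin n → ℝ => blk ζ i.succ - f (blk ζ i.castSucc) (u i))
            (a • ξ + b • η)
          = a • (blk ξ i.succ - f (blk ξ i.castSucc) (u i))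
            + b • (blk η i.succ - f (blk η i.castSucc) (u i)) := by
      intro ξ η a b hab
      funext k
      have hblk1 : blk (a • ξ + b • η) i.succ = a • blk ξ i.succ + b • blk η i.succ := rfl
      have hblk2 : blk (a • ξ + b • η) i.castSucc
          = a • blk ξ i.castSucc + b • blk η i.castSucc := rfl
      simp only [hblk1, hblk2, Pi.sub_apply, Pi.add_apply, Pi.smul_apply, smul_eq_mul]
      rw [haff i k (a • blk ξ i.castSucc + b • blk η i.castSucc),
        haff i k (blk ξ i.castSucc), haff i k (blk η i.castSucc)]
      rw [map_add, _root_.map_smul, _root_.map_smul]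
      simp only [smul_eq_mul]
      linear_combination f 0 (u i) k * hab
    exact convexOn_quad_comp hQpd.inv.posSemidef hgaff
  have hB : ConvexOn ℝ Set.univ (fun ξ : Fin (N+1) × Fin n → ℝ =>
      ∑ i : Fin N, (quadForm R⁻¹ (y i - h (blk ξ i.castSucc))
        + quadForm (Wm i) (blk ξ i.castSucc - xhat))) := by
    apply convexOn_sum_univ
    intro i _
    have hG := convexOn_G hh (inv_isDiag hRdiag) (Wm i) (y i) xhat
      (fun z w => (key i z w).2)
    exact convexOn_comp_blk hG i.castSucc
  exact hA.add hB
end
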